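/- Let V : ℤ → ℂ and let g ∈ H¹ be real-valued with g_n > 0 for all n ≥ 1. Then for every u ∈ 𝓗₀¹ the identity Σ_{n=1}^∞ V_n |(∇u)_n|² + Σ_{n=1}^∞ [(∂(V·∇g))_n / g_n] |u_n|² = Σ_{n=1}^∞ V_{n+1} |√(g_n/g_{n+1})·u_{n+1} − √(g_{n+1}/g_n)·u_n|² holds (all sums have only finitely many nonzero terms). -/

import Mathlib

noncomputable section

open scoped ENNReal

namespace HRB

/-- discrete gradient `(∇u)_n = u_n - u_{n-1}` -/
def grad (u : ℤ → ℂ) : ℤ → ℂ := fun n => u n - u (n - 1)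

/-- discrete divergence (forward difference) `(∂u)_n = u_{n+1} - u_n` -/
def fdiff (u : ℤ → ℂ) : ℤ → ℂ := fun n => u (n + 1) - u n

/-- averaging operator `(Mu)_n = (u_n + u_{n+1})/2` -/
def avg (u : ℤ → ℂ) : ℤ → ℂ := fun n => (u n + u (n + 1)) / 2

/-- negative discrete Laplacian `((-Δ)u)_n = 2u_n - u_{n-1} - u_{n+1}` -/
def negLap (u : ℤ → ℂ) : ℤ → ℂ := fun n => 2 * u n - u (n - 1) - u (n + 1)

/-- `(-Δ)^{ℓ/2}`: equal to `(-Δ)^m` if `ℓ = 2m` and to `∇ ∘ (-Δ)^m` if `ℓ = 2m+1`. -/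
def halfPow (l : ℕ) (u : ℤ → ℂ) : ℤ → ℂ :=
  if l % 2 = 0 then negLap^[l / 2] u else grad (negLap^[l / 2] u)

def gradR (u : ℤ → ℝ) : ℤ → ℝ := fun n => u n - u (n - 1)

def fdiffR (u : ℤ → ℝ) : ℤ → ℝ := fun n => u (n + 1) - u n

def negLapR (u : ℤ → ℝ) : ℤ → ℝ := fun n => 2 * u n - u (n - 1) - u (n + 1)

/-- `u ∈ H^ℓ` -/
def memH (l : ℤ) (u : ℤ → ℂ) : Prop := ∀ n : ℤ, n < l → u n = 0

/-- `u ∈ 𝓗₀^ℓ`: compactly supported elements of `H^ℓ` -/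
def memH0 (l : ℤ) (u : ℤ → ℂ) : Prop :=
  memH l u ∧ ∃ N : ℤ, ∀ n : ℤ, N ≤ n → u n = 0

/-- real-valued sequences in `H^ℓ` -/
def memHR (l : ℤ) (g : ℤ → ℝ) : Prop := ∀ n : ℤ, n < l → g n = 0

/-- `Σ_{n=a}^∞ f(n)` (as an unordered real `tsum`) -/
def qsum (a : ℤ) (f : ℤ → ℝ) : ℝ := ∑' n : ℤ, if a ≤ n then f n else 0

/-- `Σ_{n=a}^∞ f(n)` as a sum in `ℝ≥0∞` (for nonnegative `f`) -/
def esum (a : ℤ) (f : ℤ → ℝ) : ℝ≥0∞ :=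
  ∑' n : ℤ, if a ≤ n then ENNReal.ofReal (f n) else 0

/-- `⌈ℓ/2⌉` -/
def ceilHalf (l : ℕ) : ℤ := (((l + 1) / 2 : ℕ) : ℤ)

/-- `Σ_{n=⌈ℓ/2⌉}^∞ |((-Δ)^{ℓ/2}u)_n|²` -/
def energy (l : ℕ) (u : ℤ → ℂ) : ℝ :=
  qsum (ceilHalf l) fun n => ‖halfPow l u n‖ ^ 2

def eenergy (l : ℕ) (u : ℤ → ℂ) : ℝ≥0∞ :=
  esum (ceilHalf l) fun n => ‖halfPow l u n‖ ^ 2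

/-- `Σ_{n=l}^∞ ρ_n |u_n|²` -/
def wsum (l : ℤ) (ρ : ℤ → ℝ) (u : ℤ → ℂ) : ℝ := qsum l fun n => ρ n * ‖u n‖ ^ 2

def ewsum (l : ℤ) (ρ : ℤ → ℝ) (u : ℤ → ℂ) : ℝ≥0∞ := esum l fun n => ρ n * ‖u n‖ ^ 2

/-- Assumption (A1) -/
def A1 (l : ℕ) (g : ℤ → ℝ) : Prop :=
  memHR l g ∧ ∀ k : ℕ, k < l → ∀ n : ℤ, (l : ℤ) - (k : ℤ) ≤ n → 0 < fdiffR^[k] g n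

/-- Assumption (A2) -/
def A2 (l : ℕ) (g : ℤ → ℝ) : Prop :=
  ∀ k : ℕ, 1 ≤ k → k < l → ∀ n : ℤ, (l : ℤ) + 1 - (k : ℤ) ≤ n →
    0 ≤ negLapR^[l - k] (fdiffR^[k] g) n

/-- Assumption (A2') -/
def A2' (l : ℕ) (g : ℤ → ℝ) : Prop := ∀ n : ℤ, (l : ℤ) ≤ n → 0 ≤ negLapR^[l] g n

/-- Asymptotic expansion (Exp_s):
`g_n = Σ_{j=0}^{2ℓ} α_j n^{ℓ-j-s} + O(n^{-ℓ-1-s})` as `n → ∞`, with `α_0 ≠ 0`. -/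
def ExpS (l : ℕ) (g : ℤ → ℝ) (s : ℝ) : Prop :=
  ∃ α : ℕ → ℝ, α 0 ≠ 0 ∧ ∃ C : ℝ, ∃ N : ℤ, ∀ n : ℤ, N ≤ n →
    |g n - ∑ j ∈ Finset.range (2 * l + 1), α j * (n : ℝ) ^ ((l : ℝ) - (j : ℝ) - s)| ≤
      C * (n : ℝ) ^ (-(l : ℝ) - 1 - s)

/-- the weight `ρ(g)_n = ((-Δ)^ℓ g)_n / g_n` -/
def rho (l : ℕ) (g : ℤ → ℝ) : ℤ → ℝ := fun n => negLapR^[l] g n / g n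

/-- the `n`-th term of the remainder `𝓡_k^{(ℓ)}(g;u)` -/
def remTerm (l k : ℕ) (g : ℤ → ℝ) (u : ℤ → ℂ) : ℤ → ℝ := fun n =>
  (if k + 1 = l then 1
    else negLapR^[l - 1 - k] (fdiffR^[k + 1] g) n / fdiffR^[k + 1] g n) *
  ‖(Real.sqrt (fdiffR^[k] g n / fdiffR^[k] g (n + 1)) : ℂ) * fdiff^[k] u (n + 1) -
    (Real.sqrt (fdiffR^[k] g (n + 1) / fdiffR^[k] g n) : ℂ) * fdiff^[k] u n‖ ^ 2

/-- the remainder `𝓡_k^{(ℓ)}(g;u)` -/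
def rem (l k : ℕ) (g : ℤ → ℝ) (u : ℤ → ℂ) : ℝ :=
  qsum ((l : ℤ) - (k : ℤ)) (remTerm l k g u)

def erem (l k : ℕ) (g : ℤ → ℝ) (u : ℤ → ℂ) : ℝ≥0∞ :=
  esum ((l : ℤ) - (k : ℤ)) (remTerm l k g u)

/-- `ρ` is a discrete Hardy–Rellich–Birman weight for the power `ℓ` -/
def IsHRBWeight (l : ℕ) (ρ : ℤ → ℝ) : Prop :=
  (∀ n : ℤ, (l : ℤ) ≤ n → 0 ≤ ρ n) ∧
  ∀ u : ℤ → ℂ, memH0 l u → wsum l ρ u ≤ energy l u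

/-- criticality of the weight `ρ` -/
def IsCritical (l : ℕ) (ρ : ℤ → ℝ) : Prop :=
  ∀ ρ' : ℤ → ℝ, (∀ n : ℤ, (l : ℤ) ≤ n → 0 ≤ ρ' n) →
    (∀ u : ℤ → ℂ, memH0 l u → wsum l ρ' u ≤ energy l u) →
    (∀ n : ℤ, (l : ℤ) ≤ n → ρ n ≤ ρ' n) →
    ∀ n : ℤ, (l : ℤ) ≤ n → ρ' n = ρ n

/-- optimality near infinity of the weight `ρ` -/
def IsOptNearInfinity (l : ℕ) (ρ : ℤ → ℝ) : Prop :=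
  ∀ M : ℤ, (l : ℤ) ≤ M → ∀ ε : ℝ, 0 < ε →
    ∃ u : ℤ → ℂ, memH0 M u ∧ energy l u < (1 + ε) * wsum l ρ u

/-- non-attainability of the weight `ρ` -/
def IsNonAttainable (l : ℕ) (ρ : ℤ → ℝ) : Prop :=
  ∀ u : ℤ → ℂ, memH l u → ewsum l ρ u ≠ ⊤ → eenergy l u = ewsum l ρ u →
    u = 0

/-- `g^{(ℓ)}_n = √n ∏_{j=1}^{ℓ-1} (n-j)` for `n ≥ 0`, zero for `n < 0` -/
def gseq (l : ℕ) : ℤ → ℝ := fun n =>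
  if n < 0 then 0 else Real.sqrt (n : ℝ) * ∏ j ∈ Finset.Icc 1 (l - 1), ((n : ℝ) - (j : ℝ))

/-- the optimal weight `ρ^{(ℓ)}` -/
def rhoSeq (l : ℕ) : ℤ → ℝ := rho l (gseq l)

/-- `g^{(ℓ)}(q)_n = n^q ∏_{j=1}^{ℓ-1}(n-j)` for `n ≥ 0`, zero for `n < 0` -/
def gq (l : ℕ) (q : ℝ) : ℤ → ℝ := fun n =>
  if n < 0 then 0 else (n : ℝ) ^ q * ∏ j ∈ Finset.Icc 1 (l - 1), ((n : ℝ) - (j : ℝ))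

/-- `h_n = n^{ℓ-1/2}` for `n ≥ 0`, zero for `n < 0` -/
def hseq (l : ℕ) : ℤ → ℝ := fun n =>
  if n < 0 then 0 else (n : ℝ) ^ ((l : ℝ) - 1 / 2)

/-- generalized binomial coefficient `C(ν,m) = ν(ν-1)⋯(ν-m+1)/m!` -/
def genBinom (ν : ℝ) (m : ℕ) : ℝ := (∏ i ∈ Finset.range m, (ν - (i : ℝ))) / (m.factorial : ℝ)

/-- (signed) Stirling numbers of the first kind `s(n,k)`, extended by `0` for `k ≤ 0` -/
def stirling1 (n : ℕ) (k : ℤ) : ℝ :=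
  if k ≤ 0 then 0
  else (-1 : ℝ) ^ (n + k.toNat) *
    ∑ t ∈ (Finset.Icc 1 (n - 1)).powersetCard (n - k.toNat), ∏ i ∈ t, (i : ℝ)

/-- `X_m^{(ℓ)} = Σ_{j=-ℓ}^{ℓ} C(2ℓ,ℓ+j)(-1)^j j^m`, with `X_0^{(ℓ)} = 0` -/
def Xcoef (l m : ℕ) : ℝ :=
  if m = 0 then 0
  else ∑ j ∈ Finset.Icc (-(l : ℤ)) (l : ℤ),
    (((2 * l).choose ((l : ℤ) + j).toNat : ℕ) : ℝ) * (-1 : ℝ) ^ j * ((j : ℝ)) ^ m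

/-- the coefficients `r_k^{(ℓ)}` -/
def rcoef (l k : ℕ) : ℝ :=
  ∑ m ∈ Finset.Icc (2 * l) k,
    genBinom ((l : ℝ) + (m : ℝ) - (k : ℝ) - 1 / 2) m * stirling1 l ((l : ℤ) + (m : ℤ) - (k : ℤ)) *
      Xcoef l m

/-- Pochhammer symbol `(x)_ℓ = x(x+1)⋯(x+ℓ-1)` -/
def poch (x : ℝ) (l : ℕ) : ℝ := ∏ i ∈ Finset.range l, (x + (i : ℝ))


private lemma normsq_c (z : ℂ) : (‖z‖ : ℂ) ^ 2 = z * (starRingEnd ℂ) z := by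
  rw [Complex.mul_conj, Complex.normSq_eq_norm_sq]
  push_cast; ring

private noncomputable def phi (V : ℤ → ℂ) (g : ℤ → ℝ) (u : ℤ → ℂ) : ℤ → ℂ := fun n =>
  V n * (‖grad u n‖ ^ 2 : ℂ) - V n * ((gradR g n : ℝ) : ℂ) / (g n : ℂ) * (‖u n‖ ^ 2 : ℂ)

private lemma key_term (V : ℤ → ℂ) (g : ℤ → ℝ) (u : ℤ → ℂ) (n : ℤ)
    (hgn : 0 < g n) (hgn1 : 0 < g (n + 1)) :
    V (n + 1) * (‖(Real.sqrt (g n / g (n + 1)) : ℂ) * u (n + 1) -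
        (Real.sqrt (g (n + 1) / g n) : ℂ) * u n‖ ^ 2 : ℂ) -
      (V n * (‖grad u n‖ ^ 2 : ℂ) +
        fdiff (fun m => V m * ((gradR g m : ℝ) : ℂ)) n / (g n : ℂ) * (‖u n‖ ^ 2 : ℂ)) =
    phi V g u (n + 1) - phi V g u n := by
  have hp : Real.sqrt (g n) ^ 2 = g n := Real.sq_sqrt hgn.le
  have hq : Real.sqrt (g (n+1)) ^ 2 = g (n+1) := Real.sq_sqrt hgn1.le
  have hp0 : ((Real.sqrt (g n) : ℝ) : ℂ) ≠ 0 := by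
    exact_mod_cast Complex.ofReal_ne_zero.mpr (Real.sqrt_pos.mpr hgn).ne'
  have hq0 : ((Real.sqrt (g (n+1)) : ℝ) : ℂ) ≠ 0 := by
    exact_mod_cast Complex.ofReal_ne_zero.mpr (Real.sqrt_pos.mpr hgn1).ne'
  have h1 : Real.sqrt (g n / g (n + 1)) = Real.sqrt (g n) / Real.sqrt (g (n+1)) :=
    Real.sqrt_div hgn.le _
  have h2 : Real.sqrt (g (n + 1) / g n) = Real.sqrt (g (n+1)) / Real.sqrt (g n) :=
    Real.sqrt_div hgn1.le _
  have hgc : (g n : ℂ) = ((Real.sqrt (g n) : ℝ) : ℂ) ^ 2 := by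
    exact_mod_cast congrArg Complex.ofReal hp.symm
  have hgc1 : (g (n+1) : ℂ) = ((Real.sqrt (g (n+1)) : ℝ) : ℂ) ^ 2 := by
    exact_mod_cast congrArg Complex.ofReal hq.symm
  rw [h1, h2]
  simp only [phi, grad, gradR, fdiff, normsq_c, add_sub_cancel_right]
  push_cast
  simp only [map_sub, map_mul, map_div₀, Complex.conj_ofReal]
  rw [hgc, hgc1]
  field_simp
  ring


/-- Theorem 0: the weighted ground-state identity for the discrete
gradient on the half-line. -/
theorem statement0 (V : ℤ → ℂ) (g : ℤ → ℝ) (hgH : memHR 1 g)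
    (hgpos : ∀ n : ℤ, 1 ≤ n → 0 < g n) (u : ℤ → ℂ) (hu : memH0 1 u) :
    (∑' n : ℤ, if 1 ≤ n then V n * (‖grad u n‖ ^ 2 : ℂ) else 0) +
      (∑' n : ℤ, if 1 ≤ n then
        fdiff (fun m => V m * ((gradR g m : ℝ) : ℂ)) n / ((g n : ℝ) : ℂ) * (‖u n‖ ^ 2 : ℂ)
      else 0) =
    ∑' n : ℤ, if 1 ≤ n then
        V (n + 1) *
          (‖(Real.sqrt (g n / g (n + 1)) : ℂ) * u (n + 1) -
              (Real.sqrt (g (n + 1) / g n) : ℂ) * u n‖ ^ 2 : ℂ)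
      else 0 := by
  obtain ⟨huH, N, huN⟩ := hu
  set M : ℕ := (max N 1).toNat with hMdef
  have hM1 : (1 : ℤ) ≤ (M : ℤ) := by omega
  have huM : ∀ n : ℤ, (M : ℤ) ≤ n → u n = 0 := by
    intro n hn; exact huN n (by omega)
  set e : ℕ ↪ ℤ := ⟨fun i => (i : ℤ) + 1, fun a b h => by simpa using h⟩ with he
  set s : Finset ℤ := (Finset.range M).map e with hs
  have hmem : ∀ n : ℤ, n ∉ s → n < 1 ∨ (M : ℤ) < n := by
    intro n hn
    by_contra h
    push_neg at h
    exact hn (by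
      simp only [hs, Finset.mem_map, Finset.mem_range, he, Function.Embedding.coeFn_mk]
      exact ⟨(n - 1).toNat, by omega, show ((n - 1).toNat : ℤ) + 1 = n by omega⟩)
  rw [tsum_eq_sum (s := s) (f := fun n : ℤ =>
      if 1 ≤ n then V n * (‖grad u n‖ ^ 2 : ℂ) else 0) ?_,
    tsum_eq_sum (s := s) (f := fun n : ℤ =>
      if 1 ≤ n then
        fdiff (fun m => V m * ((gradR g m : ℝ) : ℂ)) n / ((g n : ℝ) : ℂ) * (‖u n‖ ^ 2 : ℂ)
      else 0) ?_,
    tsum_eq_sum (s := s) (f := fun n : ℤ =>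
      if 1 ≤ n then
        V (n + 1) *
          (‖(Real.sqrt (g n / g (n + 1)) : ℂ) * u (n + 1) -
              (Real.sqrt (g (n + 1) / g n) : ℂ) * u n‖ ^ 2 : ℂ)
      else 0) ?_]
  rotate_left
  · intro b hb
    beta_reduce
    rcases hmem b hb with h | h
    · rw [if_neg (by omega)]
    · rw [if_pos (by omega), huM b (by omega), huM (b + 1) (by omega)]
      simp
  · intro b hb
    beta_reduce
    rcases hmem b hb with h | h
    · rw [if_neg (by omega)]
    · rw [if_pos (by omega), huM b (by omega)]
      simp
  · intro b hb
    beta_reduce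
    rcases hmem b hb with h | h
    · rw [if_neg (by omega)]
    · rw [if_pos (by omega)]
      simp [grad, huM b (by omega), huM (b - 1) (by omega)]
  rw [hs, Finset.sum_map, Finset.sum_map, Finset.sum_map]
  rw [eq_comm, ← sub_eq_zero, ← Finset.sum_add_distrib, ← Finset.sum_sub_distrib]
  have hcongr : ∀ i ∈ Finset.range M,
      ((if 1 ≤ e i then V (e i + 1) *
          (‖(Real.sqrt (g (e i) / g (e i + 1)) : ℂ) * u (e i + 1) -
              (Real.sqrt (g (e i + 1) / g (e i)) : ℂ) * u (e i)‖ ^ 2 : ℂ) else 0) -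
        ((if 1 ≤ e i then V (e i) * (‖grad u (e i)‖ ^ 2 : ℂ) else 0) +
          (if 1 ≤ e i then
            fdiff (fun m => V m * ((gradR g m : ℝ) : ℂ)) (e i) / ((g (e i) : ℝ) : ℂ) *
              (‖u (e i)‖ ^ 2 : ℂ) else 0))) =
      phi V g u (((i + 1 : ℕ) : ℤ) + 1) - phi V g u ((i : ℤ) + 1) := by
    intro i _
    have hei : e i = (i : ℤ) + 1 := rfl
    rw [hei, if_pos (by omega), if_pos (by omega), if_pos (by omega)]
    rw [key_term V g u ((i : ℤ) + 1) (hgpos _ (by omega)) (hgpos _ (by omega))]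
    have hc : ((i + 1 : ℕ) : ℤ) + 1 = (i : ℤ) + 1 + 1 := by push_cast; ring
    rw [hc]
  rw [Finset.sum_congr rfl hcongr, Finset.sum_range_sub (fun i : ℕ => phi V g u ((i : ℤ) + 1)) M]
  have hphiM : phi V g u ((M : ℤ) + 1) = 0 := by
    simp [phi, grad, huM ((M : ℤ) + 1) (by omega), huM (M : ℤ) (by omega),
      huM ((M : ℤ) + 1 - 1) (by omega)]
  have hphi1 : phi V g u (((0 : ℕ) : ℤ) + 1) = 0 := by
    have hg0 : g 0 = 0 := hgH 0 (by norm_num)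
    have hu0 : u 0 = 0 := huH 0 (by norm_num)
    have hg1 : ((g 1 : ℝ) : ℂ) ≠ 0 := Complex.ofReal_ne_zero.mpr (hgpos 1 le_rfl).ne'
    simp only [phi, grad, gradR, Nat.cast_zero, zero_add]
    norm_num [hg0, hu0]
    field_simp
    ring
  rw [hphiM, hphi1, sub_zero]

end HRB
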